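/- Every connected graph on n ≥ 3 vertices with exactly n−2 pendant vertices is a double broom T(k,l,2) for some k,l ≥ 1 with k+l = n−2, and its Wiener index is minimized uniquely by T(1,n−3,2), with W(T(1,n−3,2)) = n^2 − n − 2. -/

import Mathlib

open Finset SimpleGraph

/-- The sum of distances from `u` to all vertices of `G`. -/
noncomputable def distSum {V : Type*} [Fintype V] (G : SimpleGraph V) (u : V) : ℕ :=
  ∑ v, G.dist u v

/-- The Wiener index of `G`: the sum of distances over all unordered pairs of vertices. -/
noncomputable def wienerIndex {V : Type*} [Fintype V] (G : SimpleGraph V) : ℕ :=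
  (∑ u : V, ∑ v : V, G.dist u v) / 2

/-- The double broom T(l,k,d): the path on vertices 0,…,d-1, with l pendant vertices
attached to the endpoint 0 and k pendant vertices attached to the endpoint d-1. -/
def doubleBroom (l k d : ℕ) : SimpleGraph (Fin (l + k + d)) :=
  SimpleGraph.fromRel (fun i j =>
    (i.val < d ∧ j.val = i.val + 1 ∧ j.val < d) ∨
    (i.val = 0 ∧ d ≤ j.val ∧ j.val < d + l) ∨
    (i.val = d - 1 ∧ d + l ≤ j.val))

set_option linter.unnecessarySeqFocus false



section Generic
variable {V : Type*} {W : Type*} (G : SimpleGraph V) {u v : V}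

lemma dist_lb2 (h : G.Reachable u v) (hne : u ≠ v) (hna : ¬ G.Adj u v) :
    2 ≤ G.dist u v := by
  rcases Nat.lt_or_ge (G.dist u v) 2 with hlt | hge
  · interval_cases hd : G.dist u v
    · exact absurd ((h.dist_eq_zero_iff).mp hd) hne
    · exact absurd (SimpleGraph.dist_eq_one_iff_adj.mp hd) hna
  · exact hge

lemma dist_lb3 (h : G.Reachable u v) (hne : u ≠ v) (hna : ¬ G.Adj u v)
    (hcn : ∀ w, G.Adj u w → ¬ G.Adj w v) : 3 ≤ G.dist u v := by
  rcases Nat.lt_or_ge (G.dist u v) 3 with hlt | hge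
  · exfalso
    have h2 := dist_lb2 G h hne hna
    have hd : G.dist u v = 2 := by omega
    obtain ⟨p, hp⟩ := SimpleGraph.exists_walk_of_dist_ne_zero (by omega : G.dist u v ≠ 0)
    rw [hd] at hp
    cases p with
    | nil => simp at hp
    | cons hadj q =>
      cases q with
      | nil => simp at hp
      | cons hadj2 r =>
        simp at hp
        have := SimpleGraph.Walk.Nil.eq hp
        subst this
        exact hcn _ hadj hadj2
  · exact hge

lemma dist_map_le {V' W' : Type*} (G : SimpleGraph V') (H : SimpleGraph W') (e : G ≃g H)
    (u v : V') : H.dist (e u) (e v) ≤ G.dist u v := by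
  by_cases h : G.Reachable u v
  · by_cases hne : u = v
    · subst hne; simp [SimpleGraph.dist_self]
    · obtain ⟨p, hp⟩ := SimpleGraph.exists_walk_of_dist_ne_zero
        (fun hz => hne (h.dist_eq_zero_iff.mp hz))
      calc H.dist (e u) (e v) ≤ (p.map e.toHom).length := SimpleGraph.dist_le _
        _ = G.dist u v := by rw [SimpleGraph.Walk.length_map, hp]
  · have h' : ¬ H.Reachable (e u) (e v) := by
      intro hr
      exact h (by simpa using hr.map e.symm.toHom)
    rw [SimpleGraph.dist_eq_zero_iff_eq_or_not_reachable.mpr (Or.inr h'),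
      SimpleGraph.dist_eq_zero_iff_eq_or_not_reachable.mpr (Or.inr h)]

lemma dist_map {H : SimpleGraph W} (e : G ≃g H) (u v : V) :
    H.dist (e u) (e v) = G.dist u v := by
  refine le_antisymm (dist_map_le G H e u v) ?_
  have := dist_map_le H G e.symm (e u) (e v)
  simpa using this

lemma wienerIndex_iso {V W : Type*} [Fintype V] [Fintype W]
    {G : SimpleGraph V} {H : SimpleGraph W} (e : G ≃g H) :
    wienerIndex G = wienerIndex H := by
  unfold wienerIndex
  congr 1
  refine Fintype.sum_equiv e.toEquiv _ _ fun u => ?_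
  refine Fintype.sum_equiv e.toEquiv _ _ fun v => ?_
  exact (dist_map G e u v).symm

end Generic



lemma db_adj {k l : ℕ} (i j : Fin (k + l + 2)) :
    (doubleBroom k l 2).Adj i j ↔ i.val ≠ j.val ∧
      ((i.val = 0 ∧ j.val = 1) ∨ (i.val = 0 ∧ 2 ≤ j.val ∧ j.val < 2 + k) ∨
       (i.val = 1 ∧ 2 + k ≤ j.val) ∨
       (j.val = 0 ∧ i.val = 1) ∨ (j.val = 0 ∧ 2 ≤ i.val ∧ i.val < 2 + k) ∨
       (j.val = 1 ∧ 2 + k ≤ i.val)) := by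
  simp only [doubleBroom, SimpleGraph.fromRel_adj, ne_eq, Fin.ext_iff]
  omega

def dval (k : ℕ) (u v : ℕ) : ℕ :=
  if u = v then 0
  else if u = 0 then (if v < 2 + k then 1 else 2)
  else if u = 1 then (if v = 0 ∨ 2 + k ≤ v then 1 else 2)
  else if u < 2 + k then (if v = 0 then 1 else if v < 2 + k then 2 else 3)
  else (if v = 1 then 1 else if v = 0 ∨ 2 + k ≤ v then 2 else 3)

set_option maxHeartbeats 2000000 in
lemma db_dist (k l : ℕ) (u v : Fin (k + l + 2)) :
    (doubleBroom k l 2).dist u v = dval k u.val v.val := by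
  obtain ⟨c0, hc0⟩ : ∃ x : Fin (k + l + 2), x.val = 0 := ⟨⟨0, by omega⟩, rfl⟩
  obtain ⟨c1, hc1⟩ : ∃ x : Fin (k + l + 2), x.val = 1 := ⟨⟨1, by omega⟩, rfl⟩
  have hu := u.isLt
  have hv := v.isLt
  -- basic case: equal
  by_cases heq : u.val = v.val
  · have : u = v := Fin.ext heq
    subst this
    simp [SimpleGraph.dist_self, dval]
  -- helper to prove dist = 1
  have done1 : ∀ (x y : Fin (k + l + 2)), (doubleBroom k l 2).Adj x y →
      (doubleBroom k l 2).dist x y = 1 := fun x y h =>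
    SimpleGraph.dist_eq_one_iff_adj.mpr h
  have done2 : ∀ (x y w : Fin (k + l + 2)), x.val ≠ y.val →
      ¬ (doubleBroom k l 2).Adj x y → (doubleBroom k l 2).Adj x w →
      (doubleBroom k l 2).Adj w y → (doubleBroom k l 2).dist x y = 2 := by
    intro x y w hne hna h1 h2
    refine le_antisymm ?_ (dist_lb2 _ ⟨SimpleGraph.Walk.cons h1 (SimpleGraph.Walk.cons h2 SimpleGraph.Walk.nil)⟩ (fun h => hne (by rw [h])) hna)
    simpa using SimpleGraph.dist_le (SimpleGraph.Walk.cons h1 (SimpleGraph.Walk.cons h2 SimpleGraph.Walk.nil))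
  have done3 : ∀ (x y w w' : Fin (k + l + 2)), x.val ≠ y.val →
      ¬ (doubleBroom k l 2).Adj x y →
      (∀ z, (doubleBroom k l 2).Adj x z → ¬ (doubleBroom k l 2).Adj z y) →
      (doubleBroom k l 2).Adj x w → (doubleBroom k l 2).Adj w w' →
      (doubleBroom k l 2).Adj w' y → (doubleBroom k l 2).dist x y = 3 := by
    intro x y w w' hne hna hcn h1 h2 h3
    refine le_antisymm ?_ (dist_lb3 _ ⟨SimpleGraph.Walk.cons h1
      (SimpleGraph.Walk.cons h2 (SimpleGraph.Walk.cons h3 SimpleGraph.Walk.nil))⟩ (fun h => hne (by rw [h])) hna hcn)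
    simpa using SimpleGraph.dist_le (SimpleGraph.Walk.cons h1
      (SimpleGraph.Walk.cons h2 (SimpleGraph.Walk.cons h3 SimpleGraph.Walk.nil)))
  -- now case analysis on the classes of u and v
  rcases (by omega : u.val = 0 ∨ u.val = 1 ∨ (2 ≤ u.val ∧ u.val < 2 + k) ∨ 2 + k ≤ u.val) with hU | hU | hU | hU <;>
  rcases (by omega : v.val = 0 ∨ v.val = 1 ∨ (2 ≤ v.val ∧ v.val < 2 + k) ∨ 2 + k ≤ v.val) with hV | hV | hV | hV
  -- u = 0, v = 0 : impossible
  · omega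
  -- u = 0, v = 1 : adjacent
  · rw [done1 u v ((db_adj u v).mpr (by omega)), dval]; split_ifs <;> (first | contradiction | omega)
  -- u = 0, v ∈ A : adjacent
  · rw [done1 u v ((db_adj u v).mpr (by omega)), dval]; split_ifs <;> (first | contradiction | omega)
  -- u = 0, v ∈ B : dist 2 via c1
  · rw [done2 u v c1 (by omega) (by rw [db_adj]; omega) ((db_adj u c1).mpr (by omega))
      ((db_adj c1 v).mpr (by omega)), dval]
    split_ifs <;> (first | contradiction | omega)
  -- u = 1, v = 0 : adjacent
  · rw [done1 u v ((db_adj u v).mpr (by omega)), dval]; split_ifs <;> (first | contradiction | omega)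
  · omega
  -- u = 1, v ∈ A : dist 2 via c0
  · rw [done2 u v c0 (by omega) (by rw [db_adj]; omega) ((db_adj u c0).mpr (by omega))
      ((db_adj c0 v).mpr (by omega)), dval]
    split_ifs <;> (first | contradiction | omega)
  -- u = 1, v ∈ B : adjacent
  · rw [done1 u v ((db_adj u v).mpr (by omega)), dval]; split_ifs <;> (first | contradiction | omega)
  -- u ∈ A, v = 0 : adjacent
  · rw [done1 u v ((db_adj u v).mpr (by omega)), dval]; split_ifs <;> (first | contradiction | omega)
  -- u ∈ A, v = 1 : dist 2 via c0
  · rw [done2 u v c0 (by omega) (by rw [db_adj]; omega) ((db_adj u c0).mpr (by omega))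
      ((db_adj c0 v).mpr (by omega)), dval]
    split_ifs <;> (first | contradiction | omega)
  -- u ∈ A, v ∈ A : dist 2 via c0
  · rw [done2 u v c0 (by omega) (by rw [db_adj]; omega) ((db_adj u c0).mpr (by omega))
      ((db_adj c0 v).mpr (by omega)), dval]
    split_ifs <;> (first | contradiction | omega)
  -- u ∈ A, v ∈ B : dist 3 via c0, c1
  · rw [done3 u v c0 c1 (by omega) (by rw [db_adj]; omega)
      (fun z h1 h2 => by rw [db_adj] at h1 h2; omega)
      ((db_adj u c0).mpr (by omega)) ((db_adj c0 c1).mpr (by omega))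
      ((db_adj c1 v).mpr (by omega)), dval]
    split_ifs <;> (first | contradiction | omega)
  -- u ∈ B, v = 0 : dist 2 via c1
  · rw [done2 u v c1 (by omega) (by rw [db_adj]; omega) ((db_adj u c1).mpr (by omega))
      ((db_adj c1 v).mpr (by omega)), dval]
    split_ifs <;> (first | contradiction | omega)
  -- u ∈ B, v = 1 : adjacent
  · rw [done1 u v ((db_adj u v).mpr (by omega)), dval]; split_ifs <;> (first | contradiction | omega)
  -- u ∈ B, v ∈ A : dist 3
  · rw [done3 u v c1 c0 (by omega) (by rw [db_adj]; omega)
      (fun z h1 h2 => by rw [db_adj] at h1 h2; omega)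
      ((db_adj u c1).mpr (by omega)) ((db_adj c1 c0).mpr (by omega))
      ((db_adj c0 v).mpr (by omega)), dval]
    split_ifs <;> (first | contradiction | omega)
  -- u ∈ B, v ∈ B : dist 2 via c1
  · rw [done2 u v c1 (by omega) (by rw [db_adj]; omega) ((db_adj u c1).mpr (by omega))
      ((db_adj c1 v).mpr (by omega)), dval]
    split_ifs <;> (first | contradiction | omega)

set_option maxHeartbeats 2000000 in
lemma sum_dval_row (k l u : ℕ) (hu : u < k + l + 2) :
    ∑ v ∈ Finset.range (k + l + 2), dval k u v =
      if u = 0 then 1 + k + 2*l else if u = 1 then 1 + 2*k + l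
      else if u < 2 + k then 2*k + 3*l + 1 else 3*k + 2*l + 1 := by
  have esplit : ∑ v ∈ Finset.range (k + l + 2), dval k u v =
      (∑ v ∈ Finset.Ico 0 2, dval k u v) + (∑ v ∈ Finset.Ico 2 (2+k), dval k u v)
        + (∑ v ∈ Finset.Ico (2+k) (k+l+2), dval k u v) := by
    rw [Finset.range_eq_Ico,
      ← Finset.sum_Ico_consecutive (fun v => dval k u v) (by omega : (0:ℕ) ≤ 2+k) (by omega : 2+k ≤ k+l+2),
      ← Finset.sum_Ico_consecutive (fun v => dval k u v) (by omega : (0:ℕ) ≤ 2) (by omega : 2 ≤ 2+k)]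
  have hconst : ∀ (a b c : ℕ), (∀ v, a ≤ v → v < b → dval k u v = c) →
      ∑ v ∈ Finset.Ico a b, dval k u v = (b - a) * c := by
    intro a b c h
    rw [Finset.sum_congr rfl (fun v hv => h v (Finset.mem_Ico.mp hv).1 (Finset.mem_Ico.mp hv).2),
      Finset.sum_const, Nat.card_Ico, smul_eq_mul]
  have herase : ∀ (a b c : ℕ), a ≤ u → u < b → (∀ v, a ≤ v → v < b → v ≠ u → dval k u v = c) →
      ∑ v ∈ Finset.Ico a b, dval k u v = (b - a - 1) * c := by
    intro a b c ha hb h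
    have hm : u ∈ Finset.Ico a b := Finset.mem_Ico.mpr ⟨ha, hb⟩
    rw [← Finset.sum_erase_add _ _ hm, show dval k u u = 0 by unfold dval; simp, add_zero,
      Finset.sum_congr rfl (fun v hv => h v (Finset.mem_Ico.mp (Finset.mem_erase.mp hv).2).1
        (Finset.mem_Ico.mp (Finset.mem_erase.mp hv).2).2 (Finset.mem_erase.mp hv).1),
      Finset.sum_const, Finset.card_erase_of_mem hm, Nat.card_Ico, smul_eq_mul]
  have hpair : ∑ v ∈ Finset.Ico 0 2, dval k u v = dval k u 0 + dval k u 1 := by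
    rw [← Finset.range_eq_Ico, Finset.sum_range_succ, Finset.sum_range_one]
  rcases (by omega : u = 0 ∨ u = 1 ∨ (2 ≤ u ∧ u < 2 + k) ∨ (2 + k ≤ u ∧ u < k + l + 2)) with hU | hU | hU | hU
  · rw [esplit, herase 0 2 1 (by omega) (by omega) (fun v h1 h2 h3 => by unfold dval; split_ifs <;> (first | contradiction | omega)),
      hconst 2 (2+k) 1 (fun v h1 h2 => by unfold dval; split_ifs <;> (first | contradiction | omega)),
      hconst (2+k) (k+l+2) 2 (fun v h1 h2 => by unfold dval; split_ifs <;> (first | contradiction | omega))]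
    split_ifs <;> (first | contradiction | omega)
  · rw [esplit, herase 0 2 1 (by omega) (by omega) (fun v h1 h2 h3 => by unfold dval; split_ifs <;> (first | contradiction | omega)),
      hconst 2 (2+k) 2 (fun v h1 h2 => by unfold dval; split_ifs <;> (first | contradiction | omega)),
      hconst (2+k) (k+l+2) 1 (fun v h1 h2 => by unfold dval; split_ifs <;> (first | contradiction | omega))]
    split_ifs <;> (first | contradiction | omega)
  · rw [esplit, hpair, herase 2 (2+k) 2 (by omega) (by omega) (fun v h1 h2 h3 => by unfold dval; split_ifs <;> (first | contradiction | omega)),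
      hconst (2+k) (k+l+2) 3 (fun v h1 h2 => by unfold dval; split_ifs <;> (first | contradiction | omega)),
      show dval k u 0 = 1 by unfold dval; split_ifs <;> (first | contradiction | omega),
      show dval k u 1 = 2 by unfold dval; split_ifs <;> (first | contradiction | omega)]
    split_ifs <;> (first | contradiction | omega)
  · rw [esplit, hpair, hconst 2 (2+k) 3 (fun v h1 h2 => by unfold dval; split_ifs <;> (first | contradiction | omega)),
      herase (2+k) (k+l+2) 2 (by omega) (by omega) (fun v h1 h2 h3 => by unfold dval; split_ifs <;> (first | contradiction | omega)),
      show dval k u 0 = 2 by unfold dval; split_ifs <;> (first | contradiction | omega),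
      show dval k u 1 = 1 by unfold dval; split_ifs <;> (first | contradiction | omega)]
    split_ifs <;> (first | contradiction | omega)

lemma sum_dval_total (k l : ℕ) :
    ∑ u ∈ Finset.range (k + l + 2), ∑ v ∈ Finset.range (k + l + 2), dval k u v
      = 2 * (k^2 + l^2 + 3*k*l + 2*k + 2*l + 1) := by
  rw [Finset.sum_congr rfl (fun u hu => sum_dval_row k l u (Finset.mem_range.mp hu))]
  set g : ℕ → ℕ := fun u => if u = 0 then 1 + k + 2*l else if u = 1 then 1 + 2*k + l
      else if u < 2 + k then 2*k + 3*l + 1 else 3*k + 2*l + 1 with hg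
  have esplit : ∑ u ∈ Finset.range (k + l + 2), g u =
      (∑ u ∈ Finset.Ico 0 2, g u) + (∑ u ∈ Finset.Ico 2 (2+k), g u)
        + (∑ u ∈ Finset.Ico (2+k) (k+l+2), g u) := by
    rw [Finset.range_eq_Ico,
      ← Finset.sum_Ico_consecutive g (by omega : (0:ℕ) ≤ 2+k) (by omega : 2+k ≤ k+l+2),
      ← Finset.sum_Ico_consecutive g (by omega : (0:ℕ) ≤ 2) (by omega : 2 ≤ 2+k)]
  have hconst : ∀ (a b c : ℕ), (∀ v, a ≤ v → v < b → g v = c) →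
      ∑ v ∈ Finset.Ico a b, g v = (b - a) * c := by
    intro a b c h
    rw [Finset.sum_congr rfl (fun v hv => h v (Finset.mem_Ico.mp hv).1 (Finset.mem_Ico.mp hv).2),
      Finset.sum_const, Nat.card_Ico, smul_eq_mul]
  have hpair : ∑ u ∈ Finset.Ico 0 2, g u = g 0 + g 1 := by
    rw [← Finset.range_eq_Ico, Finset.sum_range_succ, Finset.sum_range_one]
  rw [esplit, hpair, hconst 2 (2+k) (2*k+3*l+1) (fun v h1 h2 => by simp only [hg]; split_ifs <;> (first | contradiction | omega)),
    hconst (2+k) (k+l+2) (3*k+2*l+1) (fun v h1 h2 => by simp only [hg]; split_ifs <;> (first | contradiction | omega)),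
    show (2+k) - 2 = k by omega, show (k+l+2) - (2+k) = l by omega,
    show g 0 = 1 + k + 2*l by simp [hg], show g 1 = 1 + 2*k + l by simp [hg]]
  ring

lemma db_wiener (k l : ℕ) :
    wienerIndex (doubleBroom k l 2) = k^2 + l^2 + 3*k*l + 2*k + 2*l + 1 := by
  unfold wienerIndex
  have key : (∑ u : Fin (k+l+2), ∑ v : Fin (k+l+2), (doubleBroom k l 2).dist u v)
      = ∑ u ∈ Finset.range (k+l+2), ∑ v ∈ Finset.range (k+l+2), dval k u v := by
    rw [← Fin.sum_univ_eq_sum_range (fun a => ∑ v ∈ Finset.range (k+l+2), dval k a v) (k+l+2)]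
    refine Finset.sum_congr rfl fun u _ => ?_
    rw [← Fin.sum_univ_eq_sum_range (dval k u.val) (k+l+2)]
    exact Finset.sum_congr rfl fun v _ => db_dist k l u v
  rw [key, sum_dval_total]
  omega
set_option maxHeartbeats 2000000 in
lemma build_iso {V : Type*} [Fintype V] [DecidableEq V] (G : SimpleGraph V)
    (a b : V) (hab : a ≠ b) (A B : Finset V)
    (hAa : ∀ x ∈ A, x ≠ a) (hAb : ∀ x ∈ A, x ≠ b)
    (hBa : ∀ x ∈ B, x ≠ a) (hBb : ∀ x ∈ B, x ≠ b)
    (hdisj : ∀ x, ¬(x ∈ A ∧ x ∈ B))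
    (hpart : ∀ x : V, x = a ∨ x = b ∨ x ∈ A ∨ x ∈ B)
    (hadj : ∀ x y, G.Adj x y ↔
      ((x = a ∧ y = b) ∨ (x = b ∧ y = a) ∨ (x = a ∧ y ∈ A) ∨ (y = a ∧ x ∈ A) ∨
       (x = b ∧ y ∈ B) ∨ (y = b ∧ x ∈ B))) :
    Nonempty (G ≃g doubleBroom A.card B.card 2) := by
  classical
  have haA : a ∉ A := fun h => hAa a h rfl
  have haB : a ∉ B := fun h => hBa a h rfl
  have hbA : b ∉ A := fun h => hAb b h rfl
  have hbB : b ∉ B := fun h => hBb b h rfl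
  set eA : ↥A ≃ Fin A.card := Fintype.equivFinOfCardEq (Fintype.card_coe A) with heA
  set eB : ↥B ≃ Fin B.card := Fintype.equivFinOfCardEq (Fintype.card_coe B) with heB
  set idx : V → ℕ := fun x =>
    if hx : x ∈ A then 2 + (eA ⟨x, hx⟩).val
    else if hx : x ∈ B then 2 + A.card + (eB ⟨x, hx⟩).val
    else if x = a then 0 else 1 with hidx
  have fact1 : idx a = 0 := by
    simp only [hidx]; rw [dif_neg haA, dif_neg haB]; simp
  have fact2 : idx b = 1 := by
    simp only [hidx]; rw [dif_neg hbA, dif_neg hbB, if_neg (Ne.symm hab)]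
  have fact3 : ∀ x (hx : x ∈ A), idx x = 2 + (eA ⟨x, hx⟩).val := by
    intro x hx; simp only [hidx]; rw [dif_pos hx]
  have fact4 : ∀ x (hx : x ∈ B), idx x = 2 + A.card + (eB ⟨x, hx⟩).val := by
    intro x hx; simp only [hidx]; rw [dif_neg (fun h => hdisj x ⟨h, hx⟩), dif_pos hx]
  have rangeA : ∀ x, x ∈ A → 2 ≤ idx x ∧ idx x < 2 + A.card := by
    intro x hx
    rw [fact3 x hx]
    have := (eA ⟨x, hx⟩).isLt
    omega
  have rangeB : ∀ x, x ∈ B → 2 + A.card ≤ idx x ∧ idx x < A.card + B.card + 2 := by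
    intro x hx
    rw [fact4 x hx]
    have := (eB ⟨x, hx⟩).isLt
    omega
  have hbound : ∀ x, idx x < A.card + B.card + 2 := by
    intro x
    rcases hpart x with rfl | rfl | hx | hx
    · omega
    · omega
    · have := (rangeA x hx).2; omega
    · exact (rangeB x hx).2
  have hDisj : Disjoint A B := Finset.disjoint_left.mpr (fun {x} hx hy => hdisj x ⟨hx, hy⟩)
  have hcardV : Fintype.card V = A.card + B.card + 2 := by
    have huniv : (Finset.univ : Finset V) = insert a (insert b (A ∪ B)) := by
      ext x
      simp only [Finset.mem_univ, Finset.mem_insert, Finset.mem_union, true_iff]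
      exact hpart x
    rw [← Finset.card_univ, huniv,
      Finset.card_insert_of_notMem (by
        simp only [Finset.mem_insert, Finset.mem_union]
        push_neg
        exact ⟨hab, haA, haB⟩),
      Finset.card_insert_of_notMem (by
        simp only [Finset.mem_union]
        push_neg
        exact ⟨hbA, hbB⟩),
      Finset.card_union_of_disjoint hDisj]
  set f : V → Fin (A.card + B.card + 2) := fun x => ⟨idx x, hbound x⟩ with hf
  have finj : Function.Injective f := by
    intro x y h
    have h' : idx x = idx y := congrArg Fin.val h
    clear h
    rcases hpart x with rfl | rfl | hx | hx <;> rcases hpart y with rfl | rfl | hy | hy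
    · rfl
    · rw [fact1, fact2] at h'; omega
    · exfalso; rw [fact1] at h'; have := (rangeA y hy).1; omega
    · exfalso; rw [fact1] at h'; have := (rangeB y hy).1; omega
    · rw [fact1, fact2] at h'; omega
    · rfl
    · exfalso; rw [fact2] at h'; have := (rangeA y hy).1; omega
    · exfalso; rw [fact2] at h'; have := (rangeB y hy).1; omega
    · exfalso; rw [fact1] at h'; have := (rangeA x hx).1; omega
    · exfalso; rw [fact2] at h'; have := (rangeA x hx).1; omega
    · rw [fact3 x hx, fact3 y hy] at h'
      have : (⟨x, hx⟩ : ↥A) = ⟨y, hy⟩ := eA.injective (Fin.ext (by omega))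
      exact congrArg Subtype.val this
    · exfalso
      have h1 := (rangeA x hx).2
      have h2 := (rangeB y hy).1
      have h3 := (rangeA x hx).1
      omega
    · exfalso; rw [fact1] at h'; have := (rangeB x hx).1; omega
    · exfalso; rw [fact2] at h'; have := (rangeB x hx).1; omega
    · exfalso
      have h1 := (rangeB x hx).1
      have h2 := (rangeA y hy).2
      omega
    · rw [fact4 x hx, fact4 y hy] at h'
      have : (⟨x, hx⟩ : ↥B) = ⟨y, hy⟩ := eB.injective (Fin.ext (by omega))
      exact congrArg Subtype.val this
  have hbij : Function.Bijective f :=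
    (Fintype.bijective_iff_injective_and_card f).mpr ⟨finj, by simp [hcardV]⟩
  refine ⟨⟨Equiv.ofBijective f hbij, ?_⟩⟩
  intro x y
  have hvx : ((Equiv.ofBijective f hbij) x).val = idx x := rfl
  have hvy : ((Equiv.ofBijective f hbij) y).val = idx y := rfl
  rw [db_adj, hadj, hvx, hvy]
  rcases hpart x with rfl | rfl | hx | hx <;> rcases hpart y with rfl | rfl | hy | hy
  · refine iff_of_false (by rintro ⟨hne, _⟩; omega) (by tauto)
  · refine iff_of_true ⟨by omega, by omega⟩ (by tauto)
  · have h1 := rangeA y hy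
    refine iff_of_true ⟨by omega, by omega⟩ (by tauto)
  · have h1 := rangeB y hy
    refine iff_of_false (by rintro ⟨hne, hd⟩; omega)
      (by have := hBa y hy; have := hBb y hy; tauto)
  · refine iff_of_true ⟨by omega, by omega⟩ (by tauto)
  · refine iff_of_false (by rintro ⟨hne, _⟩; omega) (by tauto)
  · have h1 := rangeA y hy
    refine iff_of_false (by rintro ⟨hne, hd⟩; omega)
      (by have := hAa y hy; have := hAb y hy; tauto)
  · have h1 := rangeB y hy
    refine iff_of_true ⟨by omega, by omega⟩ (by tauto)
  · have h1 := rangeA x hx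
    refine iff_of_true ⟨by omega, by omega⟩
      (by have := hAa x hx; have := hAb x hx; tauto)
  · have h1 := rangeA x hx
    refine iff_of_false (by rintro ⟨hne, hd⟩; omega)
      (by have := hAa x hx; have := hAb x hx; tauto)
  · have h1 := rangeA x hx
    have h2 := rangeA y hy
    refine iff_of_false (by rintro ⟨hne, hd⟩; omega)
      (by have := hAa x hx; have := hAb x hx; have := hAa y hy; have := hAb y hy; tauto)
  · have h1 := rangeA x hx
    have h2 := rangeB y hy
    refine iff_of_false (by rintro ⟨hne, hd⟩; omega)
      (by have := hAa x hx; have := hAb x hx; have := hBa y hy; have := hBb y hy; tauto)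
  · have h1 := rangeB x hx
    refine iff_of_false (by rintro ⟨hne, hd⟩; omega)
      (by have := hBa x hx; have := hBb x hx; tauto)
  · have h1 := rangeB x hx
    refine iff_of_true ⟨by omega, by omega⟩
      (by have := hBa x hx; have := hBb x hx; tauto)
  · have h1 := rangeB x hx
    have h2 := rangeA y hy
    refine iff_of_false (by rintro ⟨hne, hd⟩; omega)
      (by have := hBa x hx; have := hBb x hx; have := hAa y hy; have := hAb y hy; tauto)
  · have h1 := rangeB x hx
    have h2 := rangeB y hy
    refine iff_of_false (by rintro ⟨hne, hd⟩; omega)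
      (by have := hBa x hx; have := hBb x hx; have := hBa y hy; have := hBb y hy; tauto)
lemma walk_closed {V : Type*} {G : SimpleGraph V} (s : Set V)
    (hcl : ∀ x ∈ s, ∀ y, G.Adj x y → y ∈ s) :
    ∀ {x y : V} (_ : G.Walk x y), x ∈ s → y ∈ s := by
  intro x y p
  induction p with
  | nil => exact id
  | cons h q ih => exact fun hx => ih (hcl _ hx _ h)

set_option maxHeartbeats 2000000 in
lemma structure_lemma {V : Type*} [Fintype V] [DecidableEq V] (n : ℕ) (hn : 3 ≤ n)
    (G : SimpleGraph V) [DecidableRel G.Adj] (hcard : Fintype.card V = n)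
    (hG : G.Connected)
    (hpend : (Finset.univ.filter fun v => G.degree v = 1).card = n - 2) :
    ∃ (a b : V) (A B : Finset V), a ≠ b ∧
      (∀ x ∈ A, x ≠ a) ∧ (∀ x ∈ A, x ≠ b) ∧ (∀ x ∈ B, x ≠ a) ∧ (∀ x ∈ B, x ≠ b) ∧
      (∀ x, ¬(x ∈ A ∧ x ∈ B)) ∧ (∀ x : V, x = a ∨ x = b ∨ x ∈ A ∨ x ∈ B) ∧
      (∀ x y, G.Adj x y ↔ ((x = a ∧ y = b) ∨ (x = b ∧ y = a) ∨ (x = a ∧ y ∈ A) ∨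
        (y = a ∧ x ∈ A) ∨ (x = b ∧ y ∈ B) ∨ (y = b ∧ x ∈ B))) ∧
      1 ≤ A.card ∧ 1 ≤ B.card ∧ A.card + B.card = n - 2 := by
  classical
  set P : Finset V := Finset.univ.filter (fun v => G.degree v = 1) with hPdef
  have hmemP : ∀ v, v ∈ P ↔ G.degree v = 1 := by
    intro v; simp [hPdef]
  have hScard : (Finset.univ \ P).card = 2 := by
    rw [Finset.card_sdiff_of_subset (Finset.subset_univ P), Finset.card_univ, hcard, hpend]
    omega
  obtain ⟨a, b, hab, hS⟩ := Finset.card_eq_two.mp hScard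
  have hmemS : ∀ v, v ∈ Finset.univ \ P ↔ (v = a ∨ v = b) := by
    intro v; rw [hS]; simp
  have hdeg : ∀ v : V, v ≠ a → v ≠ b → G.degree v = 1 := by
    intro v hva hvb
    by_contra h
    have : v ∈ Finset.univ \ P := by
      simp only [Finset.mem_sdiff, Finset.mem_univ, true_and]
      rw [hmemP]; exact h
    rcases (hmemS v).mp this with rfl | rfl <;> simp_all
  have hdega : G.degree a ≠ 1 := by
    have : a ∈ Finset.univ \ P := (hmemS a).mpr (Or.inl rfl)
    simp only [Finset.mem_sdiff, Finset.mem_univ, true_and] at this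
    rw [hmemP] at this; exact this
  have hdegb : G.degree b ≠ 1 := by
    have : b ∈ Finset.univ \ P := (hmemS b).mpr (Or.inr rfl)
    simp only [Finset.mem_sdiff, Finset.mem_univ, true_and] at this
    rw [hmemP] at this; exact this
  have hpos : ∀ v : V, 0 < G.degree v := by
    intro v
    rw [SimpleGraph.degree_pos_iff_exists_adj]
    obtain ⟨u, hu⟩ := Fintype.exists_ne_of_one_lt_card (by omega) v
    obtain ⟨p⟩ := hG.preconnected v u
    cases p with
    | nil => exact absurd rfl hu
    | cons h q => exact ⟨_, h⟩
  have huniq : ∀ v, G.degree v = 1 → ∃ w, G.Adj v w ∧ ∀ y, G.Adj v y → y = w := by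
    intro v hv
    obtain ⟨w, hw⟩ := Finset.card_eq_one.mp (hv : (G.neighborFinset v).card = 1)
    refine ⟨w, ?_, ?_⟩
    · rw [← SimpleGraph.mem_neighborFinset, hw]; exact Finset.mem_singleton_self w
    · intro y hy
      have : y ∈ G.neighborFinset v := (SimpleGraph.mem_neighborFinset G v y).mpr hy
      rw [hw] at this
      exact Finset.mem_singleton.mp this
  have hsmall : ∀ (s : Set V) (v : V), v ∈ s → (∀ x ∈ s, ∀ y, G.Adj x y → y ∈ s) →
      ∀ u : V, u ∈ s := by
    intro s v hv hcl u
    obtain ⟨p⟩ := hG.preconnected v u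
    exact walk_closed s hcl p hv
  have hpnb : ∀ v w, G.degree v = 1 → G.Adj v w → G.degree w ≠ 1 := by
    intro v w hv hvw hw
    obtain ⟨w', hw', huw⟩ := huniq v hv
    obtain ⟨v', hv', huv⟩ := huniq w hw
    have hveq : v' = v := (huv v hvw.symm).symm
    have hweq : w' = w := (huw w hvw).symm
    have hcl : ∀ x ∈ ({v, w} : Set V), ∀ y, G.Adj x y → y ∈ ({v, w} : Set V) := by
      intro x hx y hxy
      rcases hx with rfl | rfl
      · exact Or.inr ((huw y hxy).trans hweq)
      · exact Or.inl ((huv y hxy).trans hveq)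
    have hall := hsmall ({v, w} : Set V) v (Or.inl rfl) hcl
    have hsub : (Finset.univ : Finset V) ⊆ {v, w} := by
      intro u _
      rcases hall u with rfl | rfl
      · exact Finset.mem_insert_self _ _
      · exact Finset.mem_insert_of_mem (Finset.mem_singleton_self _)
    have := Finset.card_le_card hsub
    have h2 := Finset.card_insert_le v ({w} : Finset V)
    rw [Finset.card_univ, hcard] at this
    simp at h2
    omega
  have hpab : ∀ v, G.degree v = 1 → G.Adj v a ∨ G.Adj v b := by
    intro v hv
    obtain ⟨w, hvw, _⟩ := huniq v hv
    have hw := hpnb v w hv hvw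
    have hwab : w = a ∨ w = b := by
      by_contra h; push_neg at h; exact hw (hdeg w h.1 h.2)
    rcases hwab with rfl | rfl
    · exact Or.inl hvw
    · exact Or.inr hvw
  have hABadj : G.Adj a b := by
    by_contra hnadj
    have hcl : ∀ x ∈ ({a} ∪ {x | G.Adj a x} : Set V), ∀ y, G.Adj x y →
        y ∈ ({a} ∪ {x | G.Adj a x} : Set V) := by
      intro x hx y hxy
      rcases hx with rfl | hx
      · exact Or.inr hxy
      · -- x is a neighbor of a, x ≠ a, x ≠ b, so pendant with unique neighbor a
        have hxa : x ≠ a := (G.ne_of_adj hx).symm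
        have hxb : x ≠ b := by rintro rfl; exact hnadj hx
        obtain ⟨w, hxw, huw⟩ := huniq x (hdeg x hxa hxb)
        rw [huw y hxy, huw a hx.symm]
        exact Or.inl rfl
    have := hsmall _ a (Or.inl rfl) hcl b
    rcases this with h | h
    · have hba : b = a := h
      exact hab hba.symm
    · exact hnadj h
  set A : Finset V := Finset.univ.filter (fun v => G.degree v = 1 ∧ G.Adj a v) with hAdef
  set B : Finset V := Finset.univ.filter (fun v => G.degree v = 1 ∧ G.Adj b v) with hBdef
  have hmemA : ∀ v, v ∈ A ↔ (G.degree v = 1 ∧ G.Adj a v) := by intro v; simp [hAdef]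
  have hmemB : ∀ v, v ∈ B ↔ (G.degree v = 1 ∧ G.Adj b v) := by intro v; simp [hBdef]
  have hAa : ∀ x ∈ A, x ≠ a := by
    intro x hx
    exact (G.ne_of_adj ((hmemA x).mp hx).2).symm
  have hAb : ∀ x ∈ A, x ≠ b := by
    intro x hx
    rintro rfl
    exact hdegb ((hmemA x).mp hx).1
  have hBa : ∀ x ∈ B, x ≠ a := by
    intro x hx
    rintro rfl
    exact hdega ((hmemB x).mp hx).1
  have hBb : ∀ x ∈ B, x ≠ b := by
    intro x hx
    exact (G.ne_of_adj ((hmemB x).mp hx).2).symm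
  have hdisj : ∀ x, ¬(x ∈ A ∧ x ∈ B) := by
    rintro x ⟨hxA, hxB⟩
    obtain ⟨hx1, hxa⟩ := (hmemA x).mp hxA
    obtain ⟨_, hxb⟩ := (hmemB x).mp hxB
    obtain ⟨w, _, huw⟩ := huniq x hx1
    exact hab ((huw a hxa.symm).trans (huw b hxb.symm).symm)
  have hpart : ∀ x : V, x = a ∨ x = b ∨ x ∈ A ∨ x ∈ B := by
    intro x
    by_cases hxa : x = a
    · exact Or.inl hxa
    by_cases hxb : x = b
    · exact Or.inr (Or.inl hxb)
    have hx1 := hdeg x hxa hxb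
    rcases hpab x hx1 with h | h
    · exact Or.inr (Or.inr (Or.inl ((hmemA x).mpr ⟨hx1, h.symm⟩)))
    · exact Or.inr (Or.inr (Or.inr ((hmemB x).mpr ⟨hx1, h.symm⟩)))
  have hadj : ∀ x y, G.Adj x y ↔ ((x = a ∧ y = b) ∨ (x = b ∧ y = a) ∨ (x = a ∧ y ∈ A) ∨
      (y = a ∧ x ∈ A) ∨ (x = b ∧ y ∈ B) ∨ (y = b ∧ x ∈ B)) := by
    intro x y
    constructor
    · intro h
      rcases hpart x with rfl | rfl | hx | hx
      · rcases hpart y with rfl | rfl | hy | hy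
        · exact absurd h (G.irrefl)
        · exact Or.inl ⟨rfl, rfl⟩
        · exact Or.inr (Or.inr (Or.inl ⟨rfl, hy⟩))
        · exfalso
          obtain ⟨hy1, hyb⟩ := (hmemB y).mp hy
          obtain ⟨w, _, huw⟩ := huniq y hy1
          exact hab ((huw x h.symm).trans (huw b hyb.symm).symm)
      · rcases hpart y with rfl | rfl | hy | hy
        · exact Or.inr (Or.inl ⟨rfl, rfl⟩)
        · exact absurd h (G.irrefl)
        · exfalso
          obtain ⟨hy1, hya⟩ := (hmemA y).mp hy
          obtain ⟨w, _, huw⟩ := huniq y hy1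
          exact hab ((huw a hya.symm).trans (huw x h.symm).symm)
        · exact Or.inr (Or.inr (Or.inr (Or.inr (Or.inl ⟨rfl, hy⟩))))
      · -- x ∈ A : unique neighbor is a
        obtain ⟨hx1, hxa⟩ := (hmemA x).mp hx
        obtain ⟨w, _, huw⟩ := huniq x hx1
        have : y = a := (huw y h).trans (huw a hxa.symm).symm
        exact Or.inr (Or.inr (Or.inr (Or.inl ⟨this, hx⟩)))
      · obtain ⟨hx1, hxb⟩ := (hmemB x).mp hx
        obtain ⟨w, _, huw⟩ := huniq x hx1
        have : y = b := (huw y h).trans (huw b hxb.symm).symm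
        exact Or.inr (Or.inr (Or.inr (Or.inr (Or.inr ⟨this, hx⟩))))
    · rintro (⟨rfl, rfl⟩ | ⟨rfl, rfl⟩ | ⟨rfl, hy⟩ | ⟨rfl, hx⟩ | ⟨rfl, hy⟩ | ⟨rfl, hx⟩)
      · exact hABadj
      · exact hABadj.symm
      · exact ((hmemA y).mp hy).2
      · exact ((hmemA x).mp hx).2.symm
      · exact ((hmemB y).mp hy).2
      · exact ((hmemB x).mp hx).2.symm
  have hAcard : 1 ≤ A.card := by
    by_contra h
    have hA0 : A = ∅ := by
      rw [← Finset.card_eq_zero]; omega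
    have hsub : G.neighborFinset a ⊆ {b} := by
      intro y hy
      rw [SimpleGraph.mem_neighborFinset] at hy
      rcases hpart y with rfl | rfl | hyA | hyB
      · exact absurd hy (G.irrefl)
      · exact Finset.mem_singleton_self _
      · rw [hA0] at hyA; exact absurd hyA (Finset.notMem_empty _)
      · exfalso
        obtain ⟨hy1, hyb⟩ := (hmemB y).mp hyB
        obtain ⟨w, _, huw⟩ := huniq y hy1
        exact hab ((huw a hy.symm).trans (huw b hyb.symm).symm)
    have := Finset.card_le_card hsub
    simp only [Finset.card_singleton] at this
    have hd : G.degree a ≤ 1 := this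
    have := hpos a
    omega
  have hBcard : 1 ≤ B.card := by
    by_contra h
    have hB0 : B = ∅ := by
      rw [← Finset.card_eq_zero]; omega
    have hsub : G.neighborFinset b ⊆ {a} := by
      intro y hy
      rw [SimpleGraph.mem_neighborFinset] at hy
      rcases hpart y with rfl | rfl | hyA | hyB
      · exact Finset.mem_singleton_self _
      · exact absurd hy (G.irrefl)
      · exfalso
        obtain ⟨hy1, hya⟩ := (hmemA y).mp hyA
        obtain ⟨w, _, huw⟩ := huniq y hy1
        exact hab ((huw a hya.symm).trans (huw b hy.symm).symm)
      · rw [hB0] at hyB; exact absurd hyB (Finset.notMem_empty _)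
    have := Finset.card_le_card hsub
    simp only [Finset.card_singleton] at this
    have hd : G.degree b ≤ 1 := this
    have := hpos b
    omega
  have hsum : A.card + B.card = n - 2 := by
    have hunion : A ∪ B = P := by
      ext x
      rw [Finset.mem_union, hmemA, hmemB, hmemP]
      constructor
      · rintro (⟨h1, _⟩ | ⟨h1, _⟩) <;> exact h1
      · intro h1
        rcases hpab x h1 with h | h
        · exact Or.inl ⟨h1, h.symm⟩
        · exact Or.inr ⟨h1, h.symm⟩
    have hD : Disjoint A B := Finset.disjoint_left.mpr (fun {x} hx hy => hdisj x ⟨hx, hy⟩)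
    rw [← hpend, ← hunion, Finset.card_union_of_disjoint hD]
  exact ⟨a, b, A, B, hab, hAa, hAb, hBa, hBb, hdisj, hpart, hadj, hAcard, hBcard, hsum⟩
/-- Every connected graph on n ≥ 3 vertices with exactly n-2 pendant vertices is a double
star T(k,l,2) with k,l ≥ 1, k+l = n-2; its Wiener index is minimized uniquely by
T(1,n-3,2), whose Wiener index is n² - n - 2. -/
theorem stmt19 {V : Type*} [Fintype V] [DecidableEq V] (n : ℕ) (hn : 3 ≤ n)
    (G : SimpleGraph V) [DecidableRel G.Adj] (hcard : Fintype.card V = n)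
    (hG : G.Connected)
    (hpend : (Finset.univ.filter fun v => G.degree v = 1).card = n - 2) :
    (∃ k l : ℕ, 1 ≤ k ∧ 1 ≤ l ∧ k + l = n - 2 ∧ Nonempty (G ≃g doubleBroom k l 2)) ∧
    wienerIndex (doubleBroom 1 (n - 3) 2) ≤ wienerIndex G ∧
    (wienerIndex G = wienerIndex (doubleBroom 1 (n - 3) 2) ↔
      Nonempty (G ≃g doubleBroom 1 (n - 3) 2)) ∧
    wienerIndex (doubleBroom 1 (n - 3) 2) = n ^ 2 - n - 2 := by
  obtain ⟨a, b, A, B, hab, hAa, hAb, hBa, hBb, hdisj, hpart, hadj, hAcard, hBcard, hsum⟩ :=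
    structure_lemma n hn G hcard hG hpend
  have e1 : Nonempty (G ≃g doubleBroom A.card B.card 2) :=
    build_iso G a b hab A B hAa hAb hBa hBb hdisj hpart hadj
  have e2 : Nonempty (G ≃g doubleBroom B.card A.card 2) :=
    build_iso G b a hab.symm B A hBb hBa hAb hAa (fun x h => hdisj x ⟨h.2, h.1⟩)
      (fun x => by rcases hpart x with h | h | h | h <;> tauto)
      (fun x y => by rw [hadj x y]; tauto)
  obtain ⟨k', hk⟩ : ∃ k', A.card = k' + 1 := ⟨A.card - 1, by omega⟩
  obtain ⟨l', hl⟩ : ∃ l', B.card = l' + 1 := ⟨B.card - 1, by omega⟩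
  have hn3 : n - 3 = k' + l' + 1 := by omega
  have hWG : wienerIndex G = A.card^2 + B.card^2 + 3*A.card*B.card + 2*A.card + 2*B.card + 1 :=
    (wienerIndex_iso e1.some).trans (db_wiener _ _)
  have hWT : wienerIndex (doubleBroom 1 (n-3) 2) =
      1^2 + (n-3)^2 + 3*1*(n-3) + 2*1 + 2*(n-3) + 1 := db_wiener 1 (n-3)
  have key : A.card^2 + B.card^2 + 3*A.card*B.card + 2*A.card + 2*B.card + 1
      = (1^2 + (n-3)^2 + 3*1*(n-3) + 2*1 + 2*(n-3) + 1) + k'*l' := by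
    rw [hk, hl, hn3]; ring
  refine ⟨⟨A.card, B.card, hAcard, hBcard, hsum, e1⟩, ?_, ?_, ?_⟩
  · omega
  · constructor
    · intro heq
      have hkl : k' * l' = 0 := by omega
      rcases Nat.mul_eq_zero.mp hkl with h0 | h0
      · have h1 : A.card = 1 := by omega
        have h2 : B.card = n - 3 := by omega
        rw [← h1, ← h2]
        exact e1
      · have h1 : B.card = 1 := by omega
        have h2 : A.card = n - 3 := by omega
        rw [← h1, ← h2]
        exact e2
    · rintro ⟨e⟩
      exact wienerIndex_iso e
  · rw [hWT]
    have h3 : n - 3 + 3 = n := by omega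
    have e4 : (n-3)^2 = (n-3)*(n-3) := sq (n-3)
    have e5 : n^2 = n*n := sq n
    have e6 : n * n = (n-3)*(n-3) + 6*(n-3) + 9 := by
      conv_lhs => rw [← h3]
      ring
    omega
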